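/- Let u : ℝ → ℝ be continuous with u(x) > 0 for all x, and let w ∈ ℝ. Let f, g : ℝ → ℝ be differentiable with f'(x) = u(x)·g(x) and g'(x) = u(x)·f(x) − w·g(x) for all x ∈ ℝ. Suppose there exists x₀ ∈ ℝ with f(x) > 0 and g(x) > 0 for all x ≤ x₀. Then f(x) > 0 and g(x) > 0 for all x ∈ ℝ. -/

import Mathlib

open Filter

/-- Positivity propagation for the `x`-equation of the Painlevé II Lax
pair: if `f' = u g`, `g' = u f − w g` with `u > 0` everywhere and `f, g > 0` on some
`(−∞, x₀]`, then `f > 0` and `g > 0` on all of `ℝ`. -/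
theorem stmt_18 (u f g : ℝ → ℝ) (hu : Continuous u) (hupos : ∀ x, 0 < u x) (w : ℝ)
    (hf : ∀ x, HasDerivAt f (u x * g x) x)
    (hg : ∀ x, HasDerivAt g (u x * f x - w * g x) x)
    (x₀ : ℝ) (h0 : ∀ x ≤ x₀, 0 < f x ∧ 0 < g x) :
    ∀ x : ℝ, 0 < f x ∧ 0 < g x := by
  have hfc : Continuous f := continuous_iff_continuousAt.mpr fun x => (hf x).continuousAt
  have hgc : Continuous g := continuous_iff_continuousAt.mpr fun x => (hg x).continuousAt
  -- auxiliary function h = exp(w x) * g x, with derivative exp(w x) * u x * f x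
  set h : ℝ → ℝ := fun x => Real.exp (w * x) * g x with hh_def
  have hh : ∀ x, HasDerivAt h (Real.exp (w * x) * (u x * f x)) x := by
    intro x
    have he : HasDerivAt (fun x => Real.exp (w * x)) (Real.exp (w * x) * (w * 1)) x :=
      ((hasDerivAt_id x).const_mul w).exp
    have := he.mul (hg x)
    convert this using 1
    all_goals first | rfl | ring
  have hhc : Continuous h := continuous_iff_continuousAt.mpr fun x => (hh x).continuousAt
  intro x
  by_contra hx
  have hxS : f x ≤ 0 ∨ g x ≤ 0 := by
    rcases not_and_or.mp hx with h' | h'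
    · exact Or.inl (not_lt.mp h')
    · exact Or.inr (not_lt.mp h')
  set S : Set ℝ := {y | f y ≤ 0} ∪ {y | g y ≤ 0} with hS_def
  have hne : S.Nonempty := ⟨x, hxS⟩
  have hlb : ∀ y ∈ S, x₀ ≤ y := by
    intro y hy
    by_contra hlt
    push_neg at hlt
    obtain ⟨hf0, hg0⟩ := h0 y hlt.le
    rcases hy with hy | hy <;> simp only [Set.mem_setOf_eq] at hy <;> linarith
  have hbdd : BddBelow S := ⟨x₀, hlb⟩
  have hSc : IsClosed S :=
    (isClosed_le hfc continuous_const).union (isClosed_le hgc continuous_const)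
  set t : ℝ := sInf S with ht_def
  have htS : t ∈ S := hSc.csInf_mem hne hbdd
  have hx₀t : x₀ < t := by
    have hle : x₀ ≤ t := le_csInf hne hlb
    rcases lt_or_eq_of_le hle with h' | h'
    · exact h'
    · exfalso
      obtain ⟨hf0, hg0⟩ := h0 x₀ le_rfl
      rw [← h'] at htS
      rcases htS with hy | hy <;> simp only [Set.mem_setOf_eq] at hy <;> linarith
  have hpos : ∀ y < t, 0 < f y ∧ 0 < g y := by
    intro y hy
    by_contra hy'
    have : y ∈ S := by
      rcases not_and_or.mp hy' with h' | h'
      · exact Or.inl (not_lt.mp h')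
      · exact Or.inr (not_lt.mp h')
    exact absurd (csInf_le hbdd this) (not_le.mpr hy)
  -- f is strictly monotone on [x₀, t]
  have hfmono : StrictMonoOn f (Set.Icc x₀ t) := by
    apply strictMonoOn_of_deriv_pos (convex_Icc _ _) hfc.continuousOn
    intro y hy
    rw [interior_Icc] at hy
    rw [(hf y).deriv]
    exact mul_pos (hupos y) (hpos y hy.2).2
  have hft : 0 < f t := by
    have := hfmono ⟨le_rfl, hx₀t.le⟩ ⟨hx₀t.le, le_rfl⟩ hx₀t
    have := (h0 x₀ le_rfl).1
    linarith
  -- h is strictly monotone on [x₀, t]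
  have hhmono : StrictMonoOn h (Set.Icc x₀ t) := by
    apply strictMonoOn_of_deriv_pos (convex_Icc _ _) hhc.continuousOn
    intro y hy
    rw [interior_Icc] at hy
    rw [(hh y).deriv]
    exact mul_pos (Real.exp_pos _) (mul_pos (hupos y) (hpos y hy.2).1)
  have hgt : 0 < g t := by
    have h1 := hhmono ⟨le_rfl, hx₀t.le⟩ ⟨hx₀t.le, le_rfl⟩ hx₀t
    have h2 : 0 < h x₀ := mul_pos (Real.exp_pos _) (h0 x₀ le_rfl).2
    have h3 : 0 < Real.exp (w * t) * g t := by
      simp only [hh_def] at h1 h2 ⊢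
      linarith
    nlinarith [Real.exp_pos (w * t)]
  rcases htS with hy | hy <;> simp only [Set.mem_setOf_eq] at hy <;> linarith
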